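/- For integers n, m and any (z₁, z₂) ∈ S³ ⊂ ℂ², the 2×2 complex matrix A_{n,m}(z₁,z₂) with first row (f_n(z₁), -f_{-m}(z₂)) and second row (f_m(z₂), f_{-n}(z₁)) lies in SU(2). -/

import Mathlib

/-- For an integer `k`, the map `f_k : ℂ → ℂ`, `f_k z = z^k / |z|^(k-1)` for `z ≠ 0`
and `f_k 0 = 0`. -/
noncomputable def fpow (k : ℤ) (z : ℂ) : ℂ :=
  if z = 0 then 0 else z ^ k / ((‖z‖ : ℂ)) ^ (k - 1)

/-- The matrix `A_{n,m}(z₁,z₂)` with rows `(f_n z₁, -f_{-m} z₂)` and `(f_m z₂, f_{-n} z₁)`. -/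
noncomputable def Amat (n m : ℤ) (z₁ z₂ : ℂ) : Matrix (Fin 2) (Fin 2) ℂ :=
  !![fpow n z₁, -fpow (-m) z₂; fpow m z₂, fpow (-n) z₁]

lemma fpow_neg (k : ℤ) (z : ℂ) : fpow (-k) z = starRingEnd ℂ (fpow k z) := by
  unfold fpow
  by_cases hz : z = 0
  · simp [hz]
  · simp only [hz, if_false, map_div₀, map_zpow₀, Complex.conj_ofReal]
    have habs : (‖z‖ : ℂ) ≠ 0 := by
      simpa using norm_ne_zero_iff.mpr hz
    have hc : starRingEnd ℂ z = (‖z‖ : ℂ)^(2:ℤ) / z := by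
      rw [eq_div_iff hz]
      rw [mul_comm]
      rw [Complex.mul_conj, Complex.normSq_eq_norm_sq]
      push_cast
      rw [zpow_two]
      ring
    rw [hc]
    rw [div_zpow]
    rw [← zpow_mul]
    field_simp
    rw [← zpow_add₀ hz, ← zpow_add₀ habs, neg_add_cancel, zpow_zero, one_mul]
    congr 1
    ring

lemma fpow_abs (k : ℤ) (z : ℂ) : ‖fpow k z‖ = ‖z‖ := by
  unfold fpow
  by_cases hz : z = 0
  · simp [hz]
  · have habs : ‖z‖ ≠ 0 := norm_ne_zero_iff.mpr hz
    simp only [hz, if_false, norm_div, norm_zpow, Complex.norm_real, Real.norm_eq_abs,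
      abs_norm]
    rw [← zpow_sub₀ habs]
    simp

/-- For `(z₁,z₂) ∈ S³`, the matrix `A_{n,m}(z₁,z₂)` lies in `SU(2)`. -/
theorem stmt1 (n m : ℤ) (z₁ z₂ : ℂ)
    (hS : ‖z₁‖ ^ 2 + ‖z₂‖ ^ 2 = 1) :
    Amat n m z₁ z₂ ∈ Matrix.specialUnitaryGroup (Fin 2) ℂ := by
  set a := fpow n z₁ with ha
  set b := fpow m z₂ with hb
  have hsum : a * starRingEnd ℂ a + b * starRingEnd ℂ b = 1 := by
    rw [Complex.mul_conj, Complex.mul_conj]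
    norm_cast
    rw [Complex.normSq_eq_norm_sq, Complex.normSq_eq_norm_sq, fpow_abs, fpow_abs, hS]
  have hA : Amat n m z₁ z₂ = !![a, -(starRingEnd ℂ b); b, starRingEnd ℂ a] := by
    rw [Amat, fpow_neg, fpow_neg]
  rw [Matrix.mem_specialUnitaryGroup_iff]
  constructor
  · rw [Matrix.mem_unitaryGroup_iff, hA]
    ext i j
    fin_cases i <;> fin_cases j <;>
      simp [Matrix.mul_apply, Fin.sum_univ_two, Matrix.one_apply] <;>
      first | linear_combination hsum | ring
  · rw [hA, Matrix.det_fin_two_of]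
    linear_combination hsum
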